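/- Iterated Cauchy–Schwarz estimate for k-fold convolutions: for a positive integer k and a complex sequence (b_j)_{j≥0} with ∑_j C(j+k-1,j)|b_j|² < ∞, one has ∑_{j=0}^∞ |∑_{j_1+⋯+j_k=j} b_{j_1}⋯b_{j_k}|² ≤ (∑_{j=0}^∞ C(j+k-1,j)|b_j|²)^k. -/

import Mathlib

open Finset
open scoped ENNReal

-- two variable supermultiplicativity of multichoose
lemma choose_superadd : ∀ (r a b : ℕ), (a + b + r).choose r ≤ (a + r).choose r * (b + r).choose r := by
  intro r
  induction r with
  | zero => simp
  | succ r ihr =>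
    intro a
    induction a with
    | zero => simp
    | succ a iha =>
      intro b
      have h1 : a + 1 + b + (r + 1) = (a + b + r + 1) + 1 := by ring
      have pascal : (a + b + r + 1 + 1).choose (r + 1)
          = (a + b + r + 1).choose r + (a + b + r + 1).choose (r + 1) :=
        Nat.choose_succ_succ _ _
      have t1 : (a + b + r + 1).choose r ≤ (a + 1 + r).choose r * (b + r).choose r := by
        have := ihr (a + 1) b
        have e : a + 1 + b + r = a + b + r + 1 := by ring
        rwa [e] at this
      have t1' : (b + r).choose r ≤ (b + (r + 1)).choose (r + 1) := by
        have e : b + (r + 1) = b + r + 1 := by ring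
        rw [e, Nat.choose_succ_succ]
        exact Nat.le_add_right _ _
      have t2 : (a + b + r + 1).choose (r + 1)
          ≤ (a + (r + 1)).choose (r + 1) * (b + (r + 1)).choose (r + 1) := by
        have := iha b
        have e : a + b + (r + 1) = a + b + r + 1 := by ring
        rwa [e] at this
      have goalpascal : (a + 1 + (r + 1)).choose (r + 1)
          = (a + 1 + r).choose r + (a + 1 + r).choose (r + 1) := by
        have e : a + 1 + (r + 1) = (a + 1 + r) + 1 := by ring
        rw [e]; exact Nat.choose_succ_succ _ _
      rw [h1, pascal, goalpascal, add_mul]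
      have e2 : a + (r + 1) = a + 1 + r := by ring
      rw [e2] at t2
      calc (a + b + r + 1).choose r + (a + b + r + 1).choose (r + 1)
          ≤ (a + 1 + r).choose r * (b + r).choose r
            + (a + 1 + r).choose (r + 1) * (b + (r + 1)).choose (r + 1) := by
            exact Nat.add_le_add t1 t2
        _ ≤ _ := by gcongr

lemma choose_superadd_prod (r : ℕ) : ∀ {m : ℕ} (t : Fin m → ℕ),
    ((∑ i, t i) + r).choose r ≤ ∏ i, (t i + r).choose r := by
  intro m
  induction m with
  | zero => simp
  | succ m ih =>
    intro t
    rw [Fin.sum_univ_succ, Fin.prod_univ_succ]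
    calc (t 0 + (∑ i : Fin m, t i.succ) + r).choose r
        ≤ (t 0 + r).choose r * ((∑ i : Fin m, t i.succ) + r).choose r :=
          choose_superadd r _ _
      _ ≤ _ := by gcongr; exact ih _

lemma len_antidiagonalTuple : ∀ (k n : ℕ),
    (List.Nat.antidiagonalTuple (k + 1) n).length ≤ (n + k).choose k := by
  intro k
  induction k with
  | zero => intro n; rw [List.Nat.antidiagonalTuple_one]; simp
  | succ k ih =>
    intro n
    show (List.Nat.antidiagonalTuple (k + 1 + 1) n).length ≤ _
    rw [show List.Nat.antidiagonalTuple (k + 1 + 1) n =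
      (List.Nat.antidiagonal n).flatMap (fun ni =>
        (List.Nat.antidiagonalTuple (k + 1) ni.2).map fun x => Fin.cons ni.1 x) from rfl]
    rw [List.length_flatMap]
    simp only [Function.comp_def, List.length_map]
    rw [show List.Nat.antidiagonal n = (List.range (n + 1)).map (fun i => (i, n - i)) from rfl,
      List.map_map]
    simp only [Function.comp_def]
    have hsum : ((List.range (n + 1)).map
        (fun i => (List.Nat.antidiagonalTuple (k + 1) (i, n - i).2).length)).sum
        = ∑ i ∈ Finset.range (n + 1), (List.Nat.antidiagonalTuple (k + 1) (n - i)).length := rfl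
    rw [hsum]
    calc ∑ i ∈ Finset.range (n + 1), (List.Nat.antidiagonalTuple (k + 1) (n - i)).length
        ≤ ∑ i ∈ Finset.range (n + 1), (n - i + k).choose k :=
          Finset.sum_le_sum fun i _ => ih (n - i)
      _ = ∑ i ∈ Finset.range (n + 1), (i + k).choose k := by
          rw [← Finset.sum_range_reflect]
          apply Finset.sum_congr rfl
          intro i hi
          rw [Finset.mem_range] at hi
          congr 1
          omega
      _ = ∑ m ∈ Finset.Icc k (n + k), m.choose k := by
          rw [← Finset.Ico_add_one_right_eq_Icc, Finset.sum_Ico_eq_sum_range]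
          have e : n + k + 1 - k = n + 1 := by omega
          rw [e]
          exact Finset.sum_congr rfl fun i _ => by rw [add_comm]
      _ = (n + k + 1).choose (k + 1) := Nat.sum_Icc_choose _ _
      _ = (n + (k + 1)).choose (k + 1) := by rw [add_assoc]
lemma choose_superadd_prod' (k : ℕ) (hk : 1 ≤ k) (j : ℕ) (t : Fin k → ℕ) (ht : ∑ i, t i = j) :
    (j + k - 1).choose j ≤ ∏ i, (t i + k - 1).choose (t i) := by
  obtain ⟨k', rfl⟩ := Nat.exists_eq_add_of_le hk
  have e : ∀ m : ℕ, m + (1 + k') - 1 = m + k' := fun m => by omega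
  have hsymm : ∀ m : ℕ, (m + k').choose m = (m + k').choose k' := by
    intro m
    have := Nat.choose_symm (Nat.le_add_right m k')
    simpa using this.symm
  rw [e, hsymm]
  calc (j + k').choose k' ≤ ∏ i, (t i + k').choose k' := by
        rw [← ht]; exact choose_superadd_prod k' t
    _ = ∏ i, (t i + (1 + k') - 1).choose (t i) := by
        refine Finset.prod_congr rfl fun i _ => ?_
        rw [e, hsymm]
open scoped ENNReal

lemma card_antidiagonalTuple_le (k n : ℕ) (hk : 1 ≤ k)
    (hlen : ∀ k n : ℕ, (List.Nat.antidiagonalTuple (k + 1) n).length ≤ (n + k).choose k) :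
    (Finset.Nat.antidiagonalTuple k n).card ≤ (n + k - 1).choose n := by
  obtain ⟨k', rfl⟩ := Nat.exists_eq_add_of_le hk
  have hcard : (Finset.Nat.antidiagonalTuple (1 + k') n).card
      = (List.Nat.antidiagonalTuple (1 + k') n).length := rfl
  rw [hcard, add_comm 1 k']
  have h1 := hlen k' n
  have h2 : (n + k').choose k' = (n + k').choose n := by
    have := Nat.choose_symm (Nat.le_add_right n k')
    simpa using this
  have e : n + (k' + 1) - 1 = n + k' := by omega
  rw [e, ← h2]
  exact h1

-- ENNReal product expansion
lemma tsum_prod_pow (f : ℕ → ℝ≥0∞) : ∀ k : ℕ,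
    ∑' t : Fin k → ℕ, ∏ i, f (t i) = (∑' n, f n) ^ k := by
  intro k
  induction k with
  | zero =>
    simp only [pow_zero, Finset.univ_eq_empty, Finset.prod_empty]
    exact tsum_eq_single (fun i => i.elim0) (fun b hb => absurd (Subsingleton.elim b _) hb)
  | succ k ih =>
    rw [← (Fin.consEquiv (fun _ : Fin (k + 1) => ℕ)).tsum_eq
      (fun t : Fin (k + 1) → ℕ => ∏ i, f (t i))]
    have : ∀ p : (fun _ : Fin (k+1) => ℕ) 0 × (∀ i : Fin k, ℕ),
        (∏ i, f ((Fin.consEquiv (fun _ : Fin (k + 1) => ℕ)) p i))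
          = f p.1 * ∏ i : Fin k, f (p.2 i) := by
      intro p
      rw [Fin.prod_univ_succ]
      simp [Fin.consEquiv]
    rw [tsum_congr this, ENNReal.tsum_prod']
    simp_rw [ENNReal.tsum_mul_left, ih, ENNReal.tsum_mul_right]
    rw [pow_succ, mul_comm]
lemma tsum_antidiagonalTuple (k : ℕ) (F : ℕ → ℝ≥0∞) :
    ∑' j : ℕ, ∑ t ∈ Finset.Nat.antidiagonalTuple k j, ∏ i : Fin k, F (t i)
      = ∑' t : Fin k → ℕ, ∏ i : Fin k, F (t i) := by
  rw [← (Finset.Nat.sigmaAntidiagonalTupleEquivTuple k).tsum_eq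
    (fun t : Fin k → ℕ => ∏ i : Fin k, F (t i)), ENNReal.tsum_sigma']
  exact tsum_congr fun j =>
    (Finset.tsum_subtype _ (fun t : Fin k → ℕ => ∏ i : Fin k, F (t i))).symm

theorem convolution_cauchy_schwarz (k : ℕ) (hk : 1 ≤ k) (b : ℕ → ℂ)
    (hb : Summable fun j => ((j + k - 1).choose j : ℝ) * ‖b j‖ ^ 2) :
    ∑' j : ℕ, ‖∑ t ∈ Finset.Nat.antidiagonalTuple k j, ∏ i : Fin k, b (t i)‖ ^ 2
      ≤ (∑' j : ℕ, ((j + k - 1).choose j : ℝ) * ‖b j‖ ^ 2) ^ k := by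
  classical
  set c : ℕ → ℝ := fun m => ((m + k - 1).choose m : ℝ) with hc
  set g : ℕ → ℝ :=
    fun j => ‖∑ t ∈ Finset.Nat.antidiagonalTuple k j, ∏ i : Fin k, b (t i)‖ ^ 2 with hg
  set S : ℝ := ∑' j, c j * ‖b j‖ ^ 2 with hS
  have hg0 : ∀ j, 0 ≤ g j := fun j => sq_nonneg _
  have hcb0 : ∀ m, 0 ≤ c m * ‖b m‖ ^ 2 := fun m => mul_nonneg (Nat.cast_nonneg _) (sq_nonneg _)
  have key : ∀ j, g j ≤ ∑ t ∈ Finset.Nat.antidiagonalTuple k j,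
      ∏ i : Fin k, (c (t i) * ‖b (t i)‖ ^ 2) := by
    intro j
    set A := Finset.Nat.antidiagonalTuple k j with hA
    have step1 : g j ≤ (∑ t ∈ A, ∏ i : Fin k, ‖b (t i)‖) ^ 2 := by
      have h1 : ‖∑ t ∈ A, ∏ i : Fin k, b (t i)‖ ≤ ∑ t ∈ A, ∏ i : Fin k, ‖b (t i)‖ := by
        refine (norm_sum_le _ _).trans ?_
        exact Finset.sum_le_sum fun t _ => le_of_eq (norm_prod _ _)
      exact pow_le_pow_left₀ (norm_nonneg _) h1 2
    have step2 : (∑ t ∈ A, ∏ i : Fin k, ‖b (t i)‖) ^ 2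
        ≤ (A.card : ℝ) * ∑ t ∈ A, (∏ i : Fin k, ‖b (t i)‖) ^ 2 :=
      sq_sum_le_card_mul_sum_sq
    refine step1.trans (step2.trans ?_)
    rw [Finset.mul_sum]
    refine Finset.sum_le_sum fun t ht => ?_
    have hsum : ∑ i, t i = j := Finset.Nat.mem_antidiagonalTuple.mp ht
    have hcardN : A.card ≤ ∏ i : Fin k, (t i + k - 1).choose (t i) :=
      le_trans (card_antidiagonalTuple_le k j hk len_antidiagonalTuple)
        (choose_superadd_prod' k hk j t hsum)
    calc (A.card : ℝ) * (∏ i : Fin k, ‖b (t i)‖) ^ 2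
        = (A.card : ℝ) * ∏ i : Fin k, ‖b (t i)‖ ^ 2 := by rw [← Finset.prod_pow]
      _ ≤ (∏ i : Fin k, c (t i)) * ∏ i : Fin k, ‖b (t i)‖ ^ 2 := by
          refine mul_le_mul_of_nonneg_right ?_ (Finset.prod_nonneg fun i _ => sq_nonneg _)
          calc (A.card : ℝ)
              ≤ ((∏ i : Fin k, (t i + k - 1).choose (t i) : ℕ) : ℝ) := by exact_mod_cast hcardN
            _ = ∏ i : Fin k, c (t i) := by push_cast; rfl
      _ = _ := (Finset.prod_mul_distrib).symm
  set F : ℕ → ℝ≥0∞ := fun m => ENNReal.ofReal (c m * ‖b m‖ ^ 2) with hF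
  have hFsum : ∑' m, F m = ENNReal.ofReal S :=
    (ENNReal.ofReal_tsum_of_nonneg hcb0 hb).symm
  have big : ∑' j, ENNReal.ofReal (g j) ≤ (ENNReal.ofReal S) ^ k := by
    calc ∑' j, ENNReal.ofReal (g j)
        ≤ ∑' j, ∑ t ∈ Finset.Nat.antidiagonalTuple k j, ∏ i : Fin k, F (t i) := by
          refine ENNReal.tsum_le_tsum fun j => ?_
          refine (ENNReal.ofReal_le_ofReal (key j)).trans_eq ?_
          rw [ENNReal.ofReal_sum_of_nonneg (fun t _ => Finset.prod_nonneg fun i _ => hcb0 _)]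
          exact Finset.sum_congr rfl fun t _ => ENNReal.ofReal_prod_of_nonneg (fun i _ => hcb0 _)
      _ = ∑' t : Fin k → ℕ, ∏ i : Fin k, F (t i) := tsum_antidiagonalTuple k F
      _ = (∑' m, F m) ^ k := tsum_prod_pow F k
      _ = _ := by rw [hFsum]
  have hgsum : Summable g := by
    have hne : ∑' j, ENNReal.ofReal (g j) ≠ ⊤ :=
      ne_top_of_le_ne_top (ENNReal.pow_ne_top ENNReal.ofReal_ne_top) big
    exact (ENNReal.summable_toReal hne).congr fun j => ENNReal.toReal_ofReal (hg0 j)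
  have hS0 : 0 ≤ S := tsum_nonneg fun m => hcb0 m
  rw [← ENNReal.ofReal_le_ofReal_iff (pow_nonneg hS0 k)]
  rw [ENNReal.ofReal_tsum_of_nonneg hg0 hgsum, ENNReal.ofReal_pow hS0]
  exact big
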